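/- A congruence E on the tropical rational function semifield in n variables is finitely generated if and only if there exists a single element f such that E = ⟨(f, 0)⟩; moreover if E is proper, f can be chosen with f ≥ 0. -/
import Mathlib


/-- A tropical (max-plus) polynomial function `ℝ^n → ℝ`. -/
def IsTropPoly (n : ℕ) (f : (Fin n → ℝ) → ℝ) : Prop :=
  ∃ (A : Finset (Fin n → ℕ)) (hA : A.Nonempty) (a : (Fin n → ℕ) → ℝ),
    ∀ x, f x = A.sup' hA fun i => a i + ∑ j, (i j : ℝ) * x j

/-- A tropical rational function is a difference of two tropical polynomial functions. -/
def IsTropRat (n : ℕ) (f : (Fin n → ℝ) → ℝ) : Prop :=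
  ∃ f₁ f₂, IsTropPoly n f₁ ∧ IsTropPoly n f₂ ∧ ∀ x, f x = f₁ x - f₂ x

/-- The nonzero (≠ -∞) elements of the tropical rational function semifield. -/
abbrev TRF (n : ℕ) := { f : (Fin n → ℝ) → ℝ // IsTropRat n f }

/-- The tropical rational function semifield: tropical rational functions with `⊥ = -∞`. -/
abbrev TR (n : ℕ) := WithBot (TRF n)

/-- `add` realizes tropical addition `⊕` (pointwise max, with `-∞` neutral). -/
def AddLaw (n : ℕ) (add : TR n → TR n → TR n) : Prop :=
  (∀ f g : TRF n, ∃ h : TRF n, add ↑f ↑g = ↑h ∧ ∀ x, h.1 x = max (f.1 x) (g.1 x)) ∧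
  (∀ a, add a ⊥ = a) ∧ (∀ a, add ⊥ a = a)

/-- `mul` realizes tropical multiplication `⊙` (pointwise sum, with `-∞` absorbing). -/
def MulLaw (n : ℕ) (mul : TR n → TR n → TR n) : Prop :=
  (∀ f g : TRF n, ∃ h : TRF n, mul ↑f ↑g = ↑h ∧ ∀ x, h.1 x = f.1 x + g.1 x) ∧
  (∀ a, mul a ⊥ = ⊥) ∧ (∀ a, mul ⊥ a = ⊥)

/-- A congruence: an equivalence relation compatible with both operations. -/
def IsCongruence {α : Type*} (add mul : α → α → α) (E : α → α → Prop) : Prop :=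
  (∀ a, E a a) ∧ (∀ a b, E a b → E b a) ∧ (∀ a b c, E a b → E b c → E a c) ∧
  (∀ a b c d, E a b → E c d → E (add a c) (add b d)) ∧
  (∀ a b c d, E a b → E c d → E (mul a c) (mul b d))

/-- The congruence generated by a relation `R`: the intersection of all congruences
containing `R`. -/
def conGenBy {α : Type*} (add mul : α → α → α) (R : α → α → Prop) : α → α → Prop :=
  fun a b => ∀ E : α → α → Prop, IsCongruence add mul E → (∀ x y, R x y → E x y) → E a b

section ConGen

variable {α : Type*} {add mul : α → α → α}

theorem conGen_isCong (R : α → α → Prop) :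
    IsCongruence add mul (conGenBy add mul R) :=
  ⟨fun a _ hC _ => hC.1 a,
   fun a b h C hC hR => hC.2.1 a b (h C hC hR),
   fun a b c h1 h2 C hC hR => hC.2.2.1 a b c (h1 C hC hR) (h2 C hC hR),
   fun a b c d h1 h2 C hC hR => hC.2.2.2.1 a b c d (h1 C hC hR) (h2 C hC hR),
   fun a b c d h1 h2 C hC hR => hC.2.2.2.2 a b c d (h1 C hC hR) (h2 C hC hR)⟩

theorem conGen_self (R : α → α → Prop) : ∀ x y, R x y → conGenBy add mul R x y :=
  fun x y h _ _ hR => hR x y h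

theorem conGen_le {R S : α → α → Prop}
    (h : ∀ x y, R x y → conGenBy add mul S x y) :
    ∀ a b, conGenBy add mul R a b → conGenBy add mul S a b :=
  fun _ _ hab => hab _ (conGen_isCong S) h

theorem conGen_eq {R S : α → α → Prop}
    (h1 : ∀ x y, R x y → conGenBy add mul S x y)
    (h2 : ∀ x y, S x y → conGenBy add mul R x y) :
    conGenBy add mul R = conGenBy add mul S :=
  funext fun a => funext fun b => propext ⟨conGen_le h1 a b, conGen_le h2 a b⟩

end ConGen

theorem TRFext {n : ℕ} {f g : TRF n} (h : ∀ x, f.1 x = g.1 x) : f = g :=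
  Subtype.ext (funext h)

theorem add_coe {n : ℕ} {add : TR n → TR n → TR n} (hadd : AddLaw n add)
    (f g h : TRF n) (hh : ∀ x, h.1 x = max (f.1 x) (g.1 x)) :
    add ↑f ↑g = (↑h : TR n) := by
  obtain ⟨h', e, p⟩ := hadd.1 f g
  rw [e]
  exact WithBot.coe_inj.2 (TRFext fun x => (p x).trans (hh x).symm)

theorem mul_coe {n : ℕ} {mul : TR n → TR n → TR n} (hmul : MulLaw n mul)
    (f g h : TRF n) (hh : ∀ x, h.1 x = f.1 x + g.1 x) :
    mul ↑f ↑g = (↑h : TR n) := by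
  obtain ⟨h', e, p⟩ := hmul.1 f g
  rw [e]
  exact WithBot.coe_inj.2 (TRFext fun x => (p x).trans (hh x).symm)

/-- The multiplicative inverse (pointwise negation). -/
def Finv {n : ℕ} (f : TRF n) : TRF n :=
  ⟨fun x => -(f.1 x), by
    obtain ⟨f₁, f₂, h1, h2, h3⟩ := f.2
    exact ⟨f₂, f₁, h2, h1, fun x => by show -(f.1 x) = f₂ x - f₁ x; rw [h3 x]; ring⟩⟩

section Main

variable {n : ℕ} {add mul : TR n → TR n → TR n}

theorem bot_all (hmul : MulLaw n mul) (one : TRF n) (hone : ∀ x, one.1 x = 0)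
    (C : TR n → TR n → Prop) (hC : IsCongruence add mul C) (h : C ⊥ ↑one) :
    ∀ a b, C a b := by
  have key : ∀ a : TR n, C ⊥ a := by
    intro a
    induction a using WithBot.recBotCoe with
    | bot => exact hC.1 ⊥
    | coe t =>
      have h2 := hC.2.2.2.2 _ _ _ _ (hC.1 ((t : TR n))) h
      rw [hmul.2.1] at h2
      rwa [mul_coe hmul t one t (fun x => by rw [hone]; ring)] at h2
  intro a b
  exact hC.2.2.1 _ _ _ (hC.2.1 _ _ (key a)) (key b)

theorem squeeze (hadd : AddLaw n add) (one : TRF n) (hone : ∀ x, one.1 x = 0)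
    (C : TR n → TR n → Prop) (hC : IsCongruence add mul C) (f g : TRF n)
    (hf : C ↑f ↑one) (h0 : ∀ x, 0 ≤ g.1 x) (hle : ∀ x, g.1 x ≤ f.1 x) :
    C ↑g ↑one := by
  have h2 := hC.2.2.2.1 _ _ _ _ (hC.1 ((g : TR n))) hf
  rw [add_coe hadd g f f (fun x => (max_eq_right (hle x)).symm),
      add_coe hadd g one g
        (fun x => (max_eq_left (by rw [hone]; exact h0 x)).symm)] at h2
  exact hC.2.2.1 _ _ _ (hC.2.1 _ _ h2) hf

theorem single_pair (hadd : AddLaw n add) (hmul : MulLaw n mul)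
    (one : TRF n) (hone : ∀ x, one.1 x = 0) (a b : TR n) :
    ∃ f : TR n, (f = ⊥ ∨ ∃ g : TRF n, f = ↑g ∧ ∀ x, 0 ≤ g.1 x) ∧
      (∀ C, IsCongruence add mul C → C f ↑one → C a b) ∧
      (∀ C, IsCongruence add mul C → C a b → C f ↑one) := by
  induction a using WithBot.recBotCoe with
  | bot =>
    induction b using WithBot.recBotCoe with
    | bot =>
      exact ⟨↑one, Or.inr ⟨one, rfl, fun x => by rw [hone]⟩,
        fun C hC _ => hC.1 ⊥, fun C hC _ => hC.1 ↑one⟩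
    | coe t =>
      refine ⟨⊥, Or.inl rfl, ?_, ?_⟩
      · intro C hC h
        exact bot_all hmul one hone C hC h ⊥ ↑t
      · intro C hC h
        have h2 := hC.2.2.2.2 _ _ _ _ h (hC.1 ((Finv t : TRF n) : TR n))
        rwa [hmul.2.2, mul_coe hmul t (Finv t) one
          (fun x => by rw [hone]; show (0:ℝ) = t.1 x + -(t.1 x); ring)] at h2
  | coe s =>
    induction b using WithBot.recBotCoe with
    | bot =>
      refine ⟨⊥, Or.inl rfl, ?_, ?_⟩
      · intro C hC h
        exact bot_all hmul one hone C hC h ↑s ⊥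
      · intro C hC h
        have h2 := hC.2.2.2.2 _ _ _ _ h (hC.1 ((Finv s : TRF n) : TR n))
        rw [hmul.2.2, mul_coe hmul s (Finv s) one
          (fun x => by rw [hone]; show (0:ℝ) = s.1 x + -(s.1 x); ring)] at h2
        exact hC.2.1 _ _ h2
    | coe t =>
      obtain ⟨u, eu, pu⟩ := hmul.1 s (Finv t)
      obtain ⟨v, ev, pv⟩ := hmul.1 t (Finv s)
      obtain ⟨w, ew, pw⟩ := hadd.1 u v
      have pw' : ∀ x, w.1 x = max (s.1 x + -(t.1 x)) (t.1 x + -(s.1 x)) := by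
        intro x
        rw [pw x, pu x, pv x]
        rfl
      refine ⟨↑w, Or.inr ⟨w, rfl, ?_⟩, ?_, ?_⟩
      · intro x
        rw [pw' x]
        rcases le_total (s.1 x) (t.1 x) with h | h
        · exact le_max_of_le_right (by linarith)
        · exact le_max_of_le_left (by linarith)
      · -- C ↑w ↑one → C ↑s ↑t
        intro C hC h
        obtain ⟨ws, ews, pws⟩ := hmul.1 w s
        obtain ⟨wt, ewt, pwt⟩ := hmul.1 w t
        obtain ⟨m, em, pm⟩ := hadd.1 t s
        have h1 := hC.2.2.2.2 _ _ _ _ h (hC.1 ((s : TR n)))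
        rw [ews, mul_coe hmul one s s (fun x => by rw [hone]; ring)] at h1
        -- h1 : C ↑ws ↑s
        have h2 := hC.2.2.2.2 _ _ _ _ h (hC.1 ((t : TR n)))
        rw [ewt, mul_coe hmul one t t (fun x => by rw [hone]; ring)] at h2
        -- h2 : C ↑wt ↑t
        have hws : ∀ x, ws.1 x = max (s.1 x + -(t.1 x)) (t.1 x + -(s.1 x)) + s.1 x :=
          fun x => by rw [pws x, pw' x]
        have hwt : ∀ x, wt.1 x = max (s.1 x + -(t.1 x)) (t.1 x + -(s.1 x)) + t.1 x :=
          fun x => by rw [pwt x, pw' x]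
        have hle_t_ws : ∀ x, t.1 x ≤ ws.1 x := fun x => by
          rw [hws x]
          have := le_max_right (s.1 x + -(t.1 x)) (t.1 x + -(s.1 x)); linarith
        have hle_s_wt : ∀ x, s.1 x ≤ wt.1 x := fun x => by
          rw [hwt x]
          have := le_max_left (s.1 x + -(t.1 x)) (t.1 x + -(s.1 x)); linarith
        have h3 := hC.2.2.2.1 _ _ _ _ (hC.1 ((t : TR n))) h1
        rw [add_coe hadd t ws ws (fun x => (max_eq_right (hle_t_ws x)).symm), em] at h3
        -- h3 : C ↑ws ↑m
        have h4 := hC.2.2.2.1 _ _ _ _ (hC.1 ((s : TR n))) h2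
        rw [add_coe hadd s wt wt (fun x => (max_eq_right (hle_s_wt x)).symm),
            add_coe hadd s t m (fun x => by rw [pm x]; exact max_comm _ _)] at h4
        -- h4 : C ↑wt ↑m
        have hsm := hC.2.2.1 _ _ _ (hC.2.1 _ _ h1) h3
        have htm := hC.2.2.1 _ _ _ (hC.2.1 _ _ h2) h4
        exact hC.2.2.1 _ _ _ hsm (hC.2.1 _ _ htm)
      · -- C ↑s ↑t → C ↑w ↑one
        intro C hC h
        have h1 := hC.2.2.2.2 _ _ _ _ h (hC.1 ((Finv t : TRF n) : TR n))
        rw [eu, mul_coe hmul t (Finv t) one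
          (fun x => by rw [hone]; show (0:ℝ) = t.1 x + -(t.1 x); ring)] at h1
        have h2 := hC.2.2.2.2 _ _ _ _ (hC.2.1 _ _ h) (hC.1 ((Finv s : TRF n) : TR n))
        rw [ev, mul_coe hmul s (Finv s) one
          (fun x => by rw [hone]; show (0:ℝ) = s.1 x + -(s.1 x); ring)] at h2
        have h3 := hC.2.2.2.1 _ _ _ _ h1 h2
        rwa [ew, add_coe hadd one one one (fun x => (max_self _).symm)] at h3

theorem combine_pair (hadd : AddLaw n add) (hmul : MulLaw n mul)
    (one : TRF n) (hone : ∀ x, one.1 x = 0) (f₁ f₂ : TR n)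
    (g1 : f₁ = ⊥ ∨ ∃ g : TRF n, f₁ = ↑g ∧ ∀ x, 0 ≤ g.1 x)
    (g2 : f₂ = ⊥ ∨ ∃ g : TRF n, f₂ = ↑g ∧ ∀ x, 0 ≤ g.1 x) :
    ∃ h : TR n, (h = ⊥ ∨ ∃ g : TRF n, h = ↑g ∧ ∀ x, 0 ≤ g.1 x) ∧
      (∀ C, IsCongruence add mul C → C f₁ ↑one → C f₂ ↑one → C h ↑one) ∧
      (∀ C, IsCongruence add mul C → C h ↑one → C f₁ ↑one ∧ C f₂ ↑one) := by
  rcases g1 with rfl | ⟨a, rfl, ha⟩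
  · exact ⟨⊥, Or.inl rfl, fun C hC h1 _ => h1,
      fun C hC h1 => ⟨h1, bot_all hmul one hone C hC h1 f₂ ↑one⟩⟩
  rcases g2 with rfl | ⟨b, rfl, hb⟩
  · exact ⟨⊥, Or.inl rfl, fun C hC _ h2 => h2,
      fun C hC h1 => ⟨bot_all hmul one hone C hC h1 _ _, h1⟩⟩
  obtain ⟨m, em, pm⟩ := hadd.1 a b
  refine ⟨↑m, Or.inr ⟨m, rfl, fun x => by
      rw [pm x]; exact le_max_of_le_left (ha x)⟩, ?_, ?_⟩
  · intro C hC h1 h2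
    have h3 := hC.2.2.2.1 _ _ _ _ h1 h2
    rwa [em, add_coe hadd one one one (fun x => (max_self _).symm)] at h3
  · intro C hC h
    exact ⟨squeeze hadd one hone C hC m a h ha
        (fun x => by rw [pm x]; exact le_max_left _ _),
      squeeze hadd one hone C hC m b h hb
        (fun x => by rw [pm x]; exact le_max_right _ _)⟩

theorem main_lemma (hadd : AddLaw n add) (hmul : MulLaw n mul)
    (one : TRF n) (hone : ∀ x, one.1 x = 0) :
    ∀ (k : ℕ) (p q : Fin k → TR n),
      ∃ f : TR n, (f = ⊥ ∨ ∃ g : TRF n, f = ↑g ∧ ∀ x, 0 ≤ g.1 x) ∧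
        (∀ C, IsCongruence add mul C → C f ↑one → ∀ i, C (p i) (q i)) ∧
        (∀ C, IsCongruence add mul C → (∀ i, C (p i) (q i)) → C f ↑one) := by
  intro k
  induction k with
  | zero =>
    intro p q
    exact ⟨↑one, Or.inr ⟨one, rfl, fun x => by rw [hone]⟩,
      fun C hC _ i => i.elim0, fun C hC _ => hC.1 _⟩
  | succ k ih =>
    intro p q
    obtain ⟨f₁, good1, fwd1, bwd1⟩ := ih (fun i => p i.castSucc) (fun i => q i.castSucc)
    obtain ⟨f₂, good2, fwd2, bwd2⟩ :=
      single_pair hadd hmul one hone (p (Fin.last k)) (q (Fin.last k))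
    obtain ⟨h, goodh, fwdh, bwdh⟩ := combine_pair hadd hmul one hone f₁ f₂ good1 good2
    refine ⟨h, goodh, ?_, ?_⟩
    · intro C hC hh i
      obtain ⟨h1, h2⟩ := bwdh C hC hh
      refine Fin.lastCases ?_ ?_ i
      · exact fwd2 C hC h2
      · intro j
        exact fwd1 C hC h1 j
    · intro C hC hall
      exact fwdh C hC (bwd1 C hC (fun i => hall i.castSucc)) (bwd2 C hC (hall (Fin.last k)))

end Main

/-- A congruence `E` on the tropical rational function semifield is
finitely generated iff it is generated by a single pair `(f, 0)` (where `0` denotes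
the multiplicative identity `one`, the constant function `0`); moreover if `E` is
also proper, then `f` can be chosen with `f ≥ 0` (pointwise nonnegative). -/
theorem stmt10 (n : ℕ) (add mul : TR n → TR n → TR n)
    (hadd : AddLaw n add) (hmul : MulLaw n mul)
    (one : TRF n) (hone : ∀ x, one.1 x = 0)
    (E : TR n → TR n → Prop) (hE : IsCongruence add mul E) :
    ((∃ (k : ℕ) (p q : Fin k → TR n),
        E = conGenBy add mul (fun a b => ∃ i, a = p i ∧ b = q i)) ↔
      (∃ f : TR n, E = conGenBy add mul (fun a b => a = f ∧ b = ↑one))) ∧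
    ((∃ (k : ℕ) (p q : Fin k → TR n),
        E = conGenBy add mul (fun a b => ∃ i, a = p i ∧ b = q i)) →
      (¬ ∀ a b, E a b) →
      ∃ g : TRF n, (∀ x, 0 ≤ g.1 x) ∧
        E = conGenBy add mul (fun a b => a = ↑g ∧ b = ↑one)) := by
  constructor
  · constructor
    · rintro ⟨k, p, q, rfl⟩
      obtain ⟨f, _, fwd, bwd⟩ := main_lemma hadd hmul one hone k p q
      refine ⟨f, conGen_eq ?_ ?_⟩
      · rintro x y ⟨i, rfl, rfl⟩
        exact fwd _ (conGen_isCong _) (conGen_self _ _ _ ⟨rfl, rfl⟩) i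
      · rintro x y ⟨rfl, rfl⟩
        exact bwd _ (conGen_isCong _) (fun i => conGen_self _ _ _ ⟨i, rfl, rfl⟩)
    · rintro ⟨f, rfl⟩
      refine ⟨1, fun _ => f, fun _ => ↑one, conGen_eq ?_ ?_⟩
      · rintro x y ⟨rfl, rfl⟩
        exact conGen_self _ _ _ ⟨0, rfl, rfl⟩
      · rintro x y ⟨i, rfl, rfl⟩
        exact conGen_self _ _ _ ⟨rfl, rfl⟩
  · rintro ⟨k, p, q, rfl⟩ hproper
    obtain ⟨f, good, fwd, bwd⟩ := main_lemma hadd hmul one hone k p q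
    have heq : conGenBy add mul (fun a b => ∃ i, a = p i ∧ b = q i) =
        conGenBy add mul (fun a b => a = f ∧ b = ↑one) := by
      refine conGen_eq ?_ ?_
      · rintro x y ⟨i, rfl, rfl⟩
        exact fwd _ (conGen_isCong _) (conGen_self _ _ _ ⟨rfl, rfl⟩) i
      · rintro x y ⟨rfl, rfl⟩
        exact bwd _ (conGen_isCong _) (fun i => conGen_self _ _ _ ⟨i, rfl, rfl⟩)
    rcases good with rfl | ⟨g, rfl, hg⟩
    · exfalso
      apply hproper
      have hbot : conGenBy add mul (fun a b => ∃ i, a = p i ∧ b = q i) ⊥ ↑one := by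
        rw [heq]
        exact conGen_self _ _ _ ⟨rfl, rfl⟩
      exact bot_all hmul one hone _ (conGen_isCong _) hbot
    · exact ⟨g, hg, heq⟩
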